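/- In the construction above (girth-5 graph H, cliques U_x of size s, complete-bipartite-minus-perfect-matching between U_x and U_y for each edge (x,y) of H), for each edge (x,y) of H there are exactly 2^s maximal cliques of G contained in U_x ∪ U_y, obtained by choosing one endpoint of each of the s non-edges between U_x and U_y. -/

import Mathlib

open SimpleGraph

/-- A graph is `c`-closed if every pair of distinct non-adjacent vertices has
fewer than `c` common neighbors. -/
def IsCClosed {V : Type*} (G : SimpleGraph V) (c : ℕ) : Prop :=
  ∀ u v : V, u ≠ v → ¬G.Adj u v → (G.commonNeighbors u v).ncard < c

/-- `K` is a maximal clique of `G`. -/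
def IsMaxClique {V : Type*} (G : SimpleGraph V) (K : Finset V) : Prop :=
  G.IsClique ↑K ∧ ∀ t : Finset V, G.IsClique ↑t → K ⊆ t → K = t

/-- The lower-bound construction: replace each vertex `x` of `H` by a clique `U_x`
of size `s`, and join `U_x`, `U_y` by a complete bipartite graph minus a perfect
matching (vertices with the same `Fin s` index are matched) whenever `H.Adj x y`. -/
def blowup {W : Type*} (H : SimpleGraph W) (s : ℕ) : SimpleGraph (W × Fin s) where
  Adj a b := (a.1 = b.1 ∨ H.Adj a.1 b.1) ∧ a.2 ≠ b.2
  symm := ⟨fun a b h => ⟨h.1.imp Eq.symm (fun hh => hh.symm), h.2.symm⟩⟩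
  loopless := ⟨fun a h => h.2 rfl⟩

theorem stmt17 {W : Type*} [Fintype W] (H : SimpleGraph W) (h5 : 5 ≤ H.egirth)
    (s : ℕ) (hs : 1 ≤ s) (x y : W) (hxy : H.Adj x y) :
    {K : Finset (W × Fin s) | IsMaxClique (blowup H s) K ∧
      ∀ p ∈ K, p.1 = x ∨ p.1 = y}.ncard = 2 ^ s := by
  classical
  have hxyne : x ≠ y := hxy.ne
  set F : (Fin s → Bool) → Finset (W × Fin s) :=
    fun f => Finset.image (fun i => ((if f i then x else y), i)) Finset.univ with hF
  have hmem : ∀ (f : Fin s → Bool) (p : W × Fin s),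
      p ∈ F f ↔ p = ((if f p.2 then x else y), p.2) := by
    intro f p
    simp only [hF, Finset.mem_image, Finset.mem_univ, true_and]
    constructor
    · rintro ⟨i, rfl⟩
      rfl
    · intro h; exact ⟨p.2, h.symm⟩
  have hset : {K : Finset (W × Fin s) | IsMaxClique (blowup H s) K ∧
      ∀ p ∈ K, p.1 = x ∨ p.1 = y} = Set.range F := by
    ext K
    simp only [Set.mem_setOf_eq, Set.mem_range]
    constructor
    · rintro ⟨⟨hcl, hmax⟩, hco⟩
      -- every index is covered
      have hnotboth : ∀ i : Fin s, ¬((x, i) ∈ K ∧ (y, i) ∈ K) := by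
        rintro i ⟨h1, h2⟩
        have hne : ((x, i) : W × Fin s) ≠ (y, i) := by
          simp [hxyne]
        have := hcl h1 h2 hne
        exact this.2 rfl
      have hex : ∀ i : Fin s, (x, i) ∈ K ∨ (y, i) ∈ K := by
        intro i
        by_contra hcon
        push_neg at hcon
        obtain ⟨h1, h2⟩ := hcon
        have hcl' : (blowup H s).IsClique ↑(insert (x, i) K) := by
          rw [Finset.coe_insert]
          refine hcl.insert ?_
          intro p hp hpne
          have hp2 : p.2 ≠ i := by
            intro h
            rcases hco p hp with h' | h'
            · exact h1 (by rw [← h', ← h]; exact hp)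
            · exact h2 (by rw [← h', ← h]; exact hp)
          refine ⟨?_, by simpa using fun h => hp2 h.symm⟩
          rcases hco p hp with h' | h'
          · exact Or.inl h'.symm
          · exact Or.inr (h' ▸ hxy)
        have := hmax _ hcl' (Finset.subset_insert _ _)
        exact h1 (this ▸ Finset.mem_insert_self _ _)
      refine ⟨fun i => if (x, i) ∈ K then true else false, ?_⟩
      symm
      ext p
      rw [hmem]
      constructor
      · intro hp
        rcases hco p hp with h' | h'
        · have hx : (x, p.2) ∈ K := by rw [← h']; exact hp
          simp only [hx, if_true]
          exact Prod.ext h' rfl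
        · have hy : (y, p.2) ∈ K := by rw [← h']; exact hp
          have hx : (x, p.2) ∉ K := fun h => hnotboth p.2 ⟨h, hy⟩
          simp only [hx, if_false]
          exact Prod.ext h' rfl
      · intro hp
        by_cases h : (x, p.2) ∈ K
        · simp only [h, if_true] at hp
          rw [hp]; exact h
        · simp only [h, if_false] at hp
          rw [hp]
          rcases hex p.2 with h' | h'
          · exact absurd h' h
          · exact h'
    · rintro ⟨f, rfl⟩
      have hcl : (blowup H s).IsClique ↑(F f) := by
        intro p hp q hq hne
        rw [Finset.mem_coe, hmem] at hp hq
        have h2 : p.2 ≠ q.2 := by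
          intro h
          apply hne
          rw [hp, hq, h]
        refine ⟨?_, h2⟩
        rw [hp, hq]
        have key : ∀ a b : Bool, ((if a then x else y) = (if b then x else y)) ∨
            H.Adj (if a then x else y) (if b then x else y) := by
          intro a b
          cases a <;> cases b <;> simp [hxy, hxy.symm]
        exact key _ _
      refine ⟨⟨hcl, ?_⟩, ?_⟩
      · intro t htcl hsub
        refine Finset.Subset.antisymm hsub ?_
        intro q hq
        by_contra hq'
        have hpF : ((if f q.2 then x else y, q.2) : W × Fin s) ∈ F f := by
          rw [hmem]
        have hpt := hsub hpF
        have hne : ((if f q.2 then x else y, q.2) : W × Fin s) ≠ q := by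
          intro h
          exact hq' (h ▸ hpF)
        have := htcl hpt hq hne
        exact this.2 rfl
      · intro p hp
        rw [hmem] at hp
        rw [hp]
        by_cases h : f p.2 <;> simp [h]
  rw [hset, ← Set.image_univ]
  have hinj : Function.Injective F := by
    intro f g hfg
    funext i
    have h1 : ((if f i then x else y, i) : W × Fin s) ∈ F f := by rw [hmem]
    rw [hfg, hmem] at h1
    have := congrArg Prod.fst h1
    simp only at this
    by_cases hfi : f i <;> by_cases hgi : g i <;>
      simp_all
  rw [Set.ncard_image_of_injective _ hinj, Set.ncard_univ, Nat.card_eq_fintype_card]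
  simp
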